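/- arXiv:1102.4409 — 2 statements merged into one kernel-verified Lean document; each statement's English description precedes it below -/
import Mathlib

section
/- Let G be a weighted graph on n vertices with all degrees positive and let 0 ≤ α ≤ 1. Let π be the row vector with π(u) = d_u/vol(G), let f_0 be any vertex probability distribution on V (a row vector with nonnegative entries summing to 1), and let f_k = f_0 P_α^k for k ≥ 0. Then ‖(f_k − π) T^{-1/2}‖ ≤ (λ̄_α)^k · ‖(f_0 − π) T^{-1/2}‖, where λ̄_α = max{|1 − (1−α)λ_1|, |1 − (1−α)λ_{n−1}|}. -/
open Matrix Polynomial

noncomputable section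

/-- The degree of a vertex in a weighted graph with weight function `w`. -/
def wdeg {V : Type*} [Fintype V] (w : V → V → ℝ) (x : V) : ℝ := ∑ y, w x y

/-- The diagonal matrix `T^{-1/2}` of a weighted graph. -/
def invSqrtT {V : Type*} [Fintype V] [DecidableEq V] (w : V → V → ℝ) : Matrix V V ℝ :=
  Matrix.diagonal fun x => (Real.sqrt (wdeg w x))⁻¹

/-- The (normalized) Laplacian `I - T^{-1/2} A T^{-1/2}` of a weighted graph. -/
def wLap {V : Type*} [Fintype V] [DecidableEq V] (w : V → V → ℝ) : Matrix V V ℝ :=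
  1 - invSqrtT w * Matrix.of w * invSqrtT w

/-- The volume of a set of vertices of a weighted graph. -/
def wvol {V : Type*} [Fintype V] (w : V → V → ℝ) (X : Finset V) : ℝ := ∑ x ∈ X, wdeg w x

/-- The transition matrix `P_α = α I + (1-α) T⁻¹ A` of the `α`-lazy random walk. -/
def wTrans {V : Type*} [Fintype V] [DecidableEq V] (w : V → V → ℝ) (α : ℝ) : Matrix V V ℝ :=
  α • (1 : Matrix V V ℝ) + (1 - α) • ((Matrix.diagonal fun x => (wdeg w x)⁻¹) * Matrix.of w)

/-- Euclidean norm of a (row or column) vector. -/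
def euclNorm {m : Type*} [Fintype m] (f : m → ℝ) : ℝ := Real.sqrt (∑ x, f x ^ 2)

/-- `μ` lists the eigenvalues of the square matrix `M` (with multiplicity)
in non-decreasing order. -/
def IsEigenSeq {m : Type*} [Fintype m] [DecidableEq m] (M : Matrix m m ℝ) {n : ℕ}
    (μ : Fin n → ℝ) : Prop :=
  Monotone μ ∧ M.charpoly = ∏ i, (X - C (μ i))

section aux

variable {V : Type*} [Fintype V] [DecidableEq V]

lemma aux_sumsq_vecMul (C : Matrix V V ℝ) (h : C * Cᵀ = 1)
    (x : V → ℝ) : ∑ y, (x ᵥ* C) y ^ 2 = ∑ y, x y ^ 2 := by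
  have h1 : ∀ v : V → ℝ, ∑ y, v y ^ 2 = v ⬝ᵥ v := fun v => by
    simp [dotProduct, sq]
  rw [h1, h1]
  calc (x ᵥ* C) ⬝ᵥ (x ᵥ* C) = (x ᵥ* C) ⬝ᵥ (Cᵀ *ᵥ x) := by rw [Matrix.mulVec_transpose]
    _ = ((x ᵥ* C) ᵥ* Cᵀ) ⬝ᵥ x := Matrix.dotProduct_mulVec _ _ _
    _ = (x ᵥ* (C * Cᵀ)) ⬝ᵥ x := by rw [Matrix.vecMul_vecMul]
    _ = x ⬝ᵥ x := by rw [h, Matrix.vecMul_one]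

lemma aux_wLap_apply (w : V → V → ℝ) (i j : V) :
    wLap w i j = (1 : Matrix V V ℝ) i j
      - (Real.sqrt (wdeg w i))⁻¹ * w i j * (Real.sqrt (wdeg w j))⁻¹ := by
  simp only [wLap, Matrix.sub_apply]
  congr 1
  rw [invSqrtT, Matrix.mul_diagonal, Matrix.diagonal_mul, Matrix.of_apply]

lemma aux_wLap_isHermitian (w : V → V → ℝ) (hsymm : ∀ u v, w u v = w v u) :
    (wLap w).IsHermitian := by
  show (wLap w)ᴴ = wLap w
  ext i j
  rw [Matrix.conjTranspose_apply, star_trivial, aux_wLap_apply, aux_wLap_apply, hsymm j i]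
  by_cases h : i = j
  · subst h; ring
  · rw [Matrix.one_apply_ne h, Matrix.one_apply_ne (Ne.symm h)]; ring

lemma aux_wLap_mulVec_sqrt (w : V → V → ℝ) (hdegpos : ∀ x, 0 < wdeg w x) :
    wLap w *ᵥ (fun u => Real.sqrt (wdeg w u)) = 0 := by
  funext i
  have hs : ∀ u, (0:ℝ) < Real.sqrt (wdeg w u) := fun u => Real.sqrt_pos.mpr (hdegpos u)
  have h0 : (wLap w *ᵥ (fun u => Real.sqrt (wdeg w u))) i
      = ∑ j, wLap w i j * Real.sqrt (wdeg w j) := rfl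
  rw [h0]
  have e : ∀ j, wLap w i j * Real.sqrt (wdeg w j)
      = (1 : Matrix V V ℝ) i j * Real.sqrt (wdeg w j) - (Real.sqrt (wdeg w i))⁻¹ * w i j := by
    intro j
    rw [aux_wLap_apply]
    have h1 : (Real.sqrt (wdeg w j))⁻¹ * Real.sqrt (wdeg w j) = 1 :=
      inv_mul_cancel₀ (ne_of_gt (hs j))
    have : ((1 : Matrix V V ℝ) i j - (Real.sqrt (wdeg w i))⁻¹ * w i j * (Real.sqrt (wdeg w j))⁻¹)
          * Real.sqrt (wdeg w j)
        = (1 : Matrix V V ℝ) i j * Real.sqrt (wdeg w j)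
          - (Real.sqrt (wdeg w i))⁻¹ * w i j * ((Real.sqrt (wdeg w j))⁻¹ * Real.sqrt (wdeg w j)) := by
      ring
    rw [this, h1, mul_one]
  rw [Finset.sum_congr rfl fun j _ => e j, Finset.sum_sub_distrib]
  have e1 : ∑ j, (1 : Matrix V V ℝ) i j * Real.sqrt (wdeg w j) = Real.sqrt (wdeg w i) := by
    simp [Matrix.one_apply]
  have e2 : ∑ j, (Real.sqrt (wdeg w i))⁻¹ * w i j = Real.sqrt (wdeg w i) := by
    rw [← Finset.mul_sum]
    rw [show (∑ j, w i j) = wdeg w i from rfl]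
    rw [inv_mul_eq_div, div_eq_iff (ne_of_gt (hs i))]
    exact (Real.mul_self_sqrt (le_of_lt (hdegpos i))).symm
  rw [e1, e2, sub_self]
  rfl

lemma aux_wLap_posSemidef (w : V → V → ℝ) (hsymm : ∀ u v, w u v = w v u)
    (hnonneg : ∀ u v, 0 ≤ w u v) (hdegpos : ∀ x, 0 < wdeg w x) :
    (wLap w).PosSemidef := by
  refine Matrix.PosSemidef.of_dotProduct_mulVec_nonneg (aux_wLap_isHermitian w hsymm) fun x => ?_
  have hdnn : ∀ u, (0:ℝ) ≤ wdeg w u := fun u => le_of_lt (hdegpos u)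
  have hs : ∀ u, (0:ℝ) < Real.sqrt (wdeg w u) := fun u => Real.sqrt_pos.mpr (hdegpos u)
  set y : V → ℝ := fun u => (Real.sqrt (wdeg w u))⁻¹ * x u with hy
  have hx2 : ∀ u, x u ^ 2 = wdeg w u * y u ^ 2 := by
    intro u
    rw [hy]
    simp only
    rw [mul_pow, inv_pow, Real.sq_sqrt (hdnn u), ← mul_assoc,
      mul_inv_cancel₀ (ne_of_gt (hdegpos u)), one_mul]
  have hLx : x ⬝ᵥ (wLap w *ᵥ x) = ∑ u, x u ^ 2 - ∑ u, ∑ v, w u v * y u * y v := by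
    have h0 : x ⬝ᵥ (wLap w *ᵥ x) = ∑ u, ∑ v, x u * (wLap w u v * x v) := by
      simp [dotProduct, Matrix.mulVec, Finset.mul_sum]
    rw [h0]
    have e : ∀ u v, x u * (wLap w u v * x v)
        = (1 : Matrix V V ℝ) u v * (x u * x v) - w u v * y u * y v := by
      intro u v
      rw [aux_wLap_apply, hy]
      simp only
      ring
    rw [Finset.sum_congr rfl fun u _ => Finset.sum_congr rfl fun v _ => e u v,
      Finset.sum_congr rfl fun u _ => Finset.sum_sub_distrib _ _, Finset.sum_sub_distrib]
    congr 1
    refine Finset.sum_congr rfl fun u _ => ?_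
    simp [Matrix.one_apply, sq]
  have h1 : ∑ u, ∑ v, w u v * y u ^ 2 = ∑ u, x u ^ 2 := by
    refine Finset.sum_congr rfl fun u _ => ?_
    rw [← Finset.sum_mul, show (∑ v, w u v) = wdeg w u from rfl, hx2 u]
  have h2 : ∑ u, ∑ v, w u v * y v ^ 2 = ∑ u, x u ^ 2 := by
    rw [Finset.sum_comm]
    refine Finset.sum_congr rfl fun v _ => ?_
    have hcol : ∑ u, w u v = wdeg w v := by
      rw [Finset.sum_congr rfl fun u _ => hsymm u v]
      rfl
    rw [← Finset.sum_mul, hcol, hx2 v]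
  have hsq : (0:ℝ) ≤ ∑ u, ∑ v, w u v * (y u - y v) ^ 2 :=
    Finset.sum_nonneg fun u _ => Finset.sum_nonneg fun v _ =>
      mul_nonneg (hnonneg u v) (sq_nonneg _)
  have hexp : ∑ u, ∑ v, w u v * (y u - y v) ^ 2
      = (∑ u, ∑ v, w u v * y u ^ 2) + (∑ u, ∑ v, w u v * y v ^ 2)
        - 2 * ∑ u, ∑ v, w u v * y u * y v := by
    have e : ∀ u v : V, w u v * (y u - y v) ^ 2
        = (w u v * y u ^ 2 + w u v * y v ^ 2) - 2 * (w u v * y u * y v) := by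
      intro u v; ring
    rw [Finset.sum_congr rfl fun u _ => Finset.sum_congr rfl fun v _ => e u v]
    rw [Finset.sum_congr rfl fun u _ => Finset.sum_sub_distrib _ _, Finset.sum_sub_distrib,
      Finset.sum_congr rfl fun u _ => Finset.sum_add_distrib, Finset.sum_add_distrib]
    congr 1
    simp [Finset.mul_sum]
  have hstar : star x = x := by simp
  rw [hstar, hLx]
  rw [h1, h2] at hexp
  linarith

lemma aux_charpoly (A : Matrix V V ℝ) (hA : A.IsHermitian) :
    A.charpoly = ∏ i, (X - C (hA.eigenvalues i)) := by
  set U := (hA.eigenvectorUnitary : Matrix V V ℝ) with hUdef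
  have hU1 : U * Uᵀ = 1 := by
    rw [← Matrix.conjTranspose_eq_transpose_of_trivial, ← Matrix.star_eq_conjTranspose]
    exact Matrix.mem_unitaryGroup_iff.mp hA.eigenvectorUnitary.2
  have hspec : A = U * diagonal hA.eigenvalues * Uᵀ := by
    have := hA.spectral_theorem
    rw [← Matrix.conjTranspose_eq_transpose_of_trivial]
    convert this using 2
    simp [Function.comp_def, Matrix.star_eq_conjTranspose, hUdef]
  apply Polynomial.funext
  intro r
  rw [eval_prod]
  simp only [eval_sub, eval_X, eval_C]
  have hl : eval r A.charpoly = ((charmatrix A).map (eval r)).det := by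
    rw [Matrix.charpoly]
    have := RingHom.map_det (evalRingHom r) (charmatrix A)
    simpa using this
  rw [hl]
  have hm : (charmatrix A).map (eval r) = r • (1 : Matrix V V ℝ) - A := by
    ext i j
    by_cases h : i = j
    · subst h
      simp [charmatrix_apply, Matrix.map_apply, Matrix.smul_apply, Matrix.one_apply,
        Matrix.diagonal_apply_eq, smul_eq_mul]
    · simp [charmatrix_apply, Matrix.map_apply, Matrix.smul_apply, Matrix.one_apply, h,
        Matrix.diagonal_apply_ne _ h]
  rw [hm]
  have hc : r • (1 : Matrix V V ℝ) - A
      = U * diagonal (fun i => r - hA.eigenvalues i) * Uᵀ := by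
    conv_lhs => rw [hspec]
    rw [show r • (1 : Matrix V V ℝ) = U * (r • (1 : Matrix V V ℝ)) * Uᵀ by
      rw [Matrix.mul_smul, mul_one, Matrix.smul_mul, hU1]]
    rw [← Matrix.sub_mul, ← Matrix.mul_sub]
    congr 2
    rw [Matrix.smul_one_eq_diagonal, ← Matrix.diagonal_sub]
  rw [hc, Matrix.det_mul, Matrix.det_mul, det_diagonal]
  have hUU : U.det * Uᵀ.det = 1 := by rw [← Matrix.det_mul, hU1, Matrix.det_one]
  calc U.det * (∏ i, (r - hA.eigenvalues i)) * Uᵀ.det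
      = (∏ i, (r - hA.eigenvalues i)) * (U.det * Uᵀ.det) := by ring
    _ = ∏ i, (r - hA.eigenvalues i) := by rw [hUU, mul_one]

end aux

/-- mixing of the α-lazy random walk on a weighted graph. -/
theorem stmt_0 {V : Type*} [Fintype V] [DecidableEq V]
    (w : V → V → ℝ)
    (hsymm : ∀ u v, w u v = w v u)
    (hnonneg : ∀ u v, 0 ≤ w u v)
    (hloop : ∀ v, w v v = 0)
    (hdegpos : ∀ x, 0 < wdeg w x)
    (n : ℕ) (hn : Fintype.card V = n) (hn2 : 2 ≤ n)
    (μ : Fin n → ℝ) (hμ : IsEigenSeq (wLap w) μ)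
    (α : ℝ) (hα0 : 0 ≤ α) (hα1 : α ≤ 1)
    (π f₀ : V → ℝ)
    (hπ : ∀ u, π u = wdeg w u / wvol w Finset.univ)
    (hf₀nonneg : ∀ v, 0 ≤ f₀ v) (hf₀sum : ∑ v, f₀ v = 1)
    (f : ℕ → V → ℝ) (hf : ∀ k, f k = f₀ ᵥ* (wTrans w α) ^ k)
    (k : ℕ) :
    euclNorm ((f k - π) ᵥ* invSqrtT w) ≤
      (max |1 - (1 - α) * μ ⟨1, by omega⟩| |1 - (1 - α) * μ ⟨n - 1, by omega⟩|) ^ k *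
        euclNorm ((f₀ - π) ᵥ* invSqrtT w) := by
  classical
  have hμmono := hμ.1
  have hne : Nonempty V := Fintype.card_pos_iff.mp (by omega)
  have hvol : 0 < wvol w Finset.univ :=
    Finset.sum_pos (fun x _ => hdegpos x) Finset.univ_nonempty
  have hs : ∀ u, (0:ℝ) < Real.sqrt (wdeg w u) := fun u => Real.sqrt_pos.mpr (hdegpos u)
  have hi1 : (1 : ℕ) < n := by omega
  have hiN : n - 1 < n := by omega
  have hΛ0 : (0:ℝ) ≤ max |1 - (1 - α) * μ ⟨1, hi1⟩| |1 - (1 - α) * μ ⟨n - 1, hiN⟩| :=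
    le_trans (abs_nonneg _) (le_max_left _ _)
  set Λ : ℝ := max |1 - (1 - α) * μ ⟨1, hi1⟩| |1 - (1 - α) * μ ⟨n - 1, hiN⟩| with hΛdef
  have hL := aux_wLap_isHermitian w hsymm
  have hLpsd : (wLap w).PosSemidef := aux_wLap_posSemidef w hsymm hnonneg hdegpos
  set ev : V → ℝ := hL.eigenvalues with hev
  set U : Matrix V V ℝ := (hL.eigenvectorUnitary : Matrix V V ℝ) with hU
  have hU1 : U * Uᵀ = 1 := by
    rw [hU, ← Matrix.conjTranspose_eq_transpose_of_trivial, ← Matrix.star_eq_conjTranspose]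
    exact Matrix.mem_unitaryGroup_iff.mp hL.eigenvectorUnitary.2
  have hU2 : Uᵀ * U = 1 := by
    rw [hU, ← Matrix.conjTranspose_eq_transpose_of_trivial, ← Matrix.star_eq_conjTranspose]
    exact Matrix.mem_unitaryGroup_iff'.mp hL.eigenvectorUnitary.2
  have hspec : wLap w = U * diagonal ev * Uᵀ := by
    have h0 := hL.spectral_theorem
    rw [hU, hev, ← Matrix.conjTranspose_eq_transpose_of_trivial]
    convert h0 using 2
    simp [Function.comp_def, Matrix.star_eq_conjTranspose]
  -- the multiset of eigenvalues of the Laplacian is the multiset of the μ's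
  have hchar : ∏ i, (X - C (ev i)) = ∏ j, (X - C (μ j)) := by
    rw [hev, ← aux_charpoly (wLap w) hL, hμ.2]
  have hms : Multiset.map ev Finset.univ.val = Multiset.map μ Finset.univ.val := by
    have h1 : (Multiset.map (fun a : ℝ => X - C a) (Multiset.map ev Finset.univ.val)).prod
        = (Multiset.map (fun a : ℝ => X - C a) (Multiset.map μ Finset.univ.val)).prod := by
      rw [Multiset.map_map, Multiset.map_map]
      calc (Multiset.map ((fun a : ℝ => X - C a) ∘ ev) Finset.univ.val).prod
          = ∏ i, (X - C (ev i)) := (Finset.prod_eq_multiset_prod _ _).symm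
        _ = ∏ j, (X - C (μ j)) := hchar
        _ = (Multiset.map ((fun a : ℝ => X - C a) ∘ μ) Finset.univ.val).prod :=
            Finset.prod_eq_multiset_prod _ _
    have h2 := congrArg Polynomial.roots h1
    rwa [Polynomial.roots_multiset_prod_X_sub_C, Polynomial.roots_multiset_prod_X_sub_C] at h2
  have hev0 : ∀ i, 0 ≤ ev i := fun i => hLpsd.eigenvalues_nonneg i
  have hex : ∀ i : V, ∃ j : Fin n, μ j = ev i := by
    intro i
    have hmem : ev i ∈ Multiset.map μ Finset.univ.val := by
      rw [← hms]
      exact Multiset.mem_map_of_mem ev (Finset.mem_univ i)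
    obtain ⟨j, -, hj⟩ := Multiset.mem_map.mp hmem
    exact ⟨j, hj⟩
  have hub : ∀ i : V, ev i ≤ μ ⟨n - 1, hiN⟩ := by
    intro i
    obtain ⟨j, hj⟩ := hex i
    rw [← hj]
    refine hμmono ?_
    have := j.isLt
    exact Fin.mk_le_mk.mpr (by omega) |>.trans_eq rfl
  have hcount : ∀ a b : V, ev a < μ ⟨1, hi1⟩ → ev b < μ ⟨1, hi1⟩ → a = b := by
    intro a b ha hb
    by_contra hab
    have hsub : {a, b} ⊆ Finset.univ.filter (fun v => ev v < μ ⟨1, hi1⟩) := by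
      intro x hx
      simp only [Finset.mem_insert, Finset.mem_singleton] at hx
      rcases hx with rfl | rfl <;> simp [ha, hb]
    have h2le : 2 ≤ (Finset.univ.filter (fun v => ev v < μ ⟨1, hi1⟩)).card := by
      have hc := Finset.card_le_card hsub
      rwa [Finset.card_insert_of_notMem (by simpa using hab), Finset.card_singleton] at hc
    have e1 : (Finset.univ.filter (fun v => ev v < μ ⟨1, hi1⟩)).card
        = Multiset.countP (fun x : ℝ => x < μ ⟨1, hi1⟩) (Multiset.map ev Finset.univ.val) := by
      rw [Multiset.countP_map]
      rfl
    have e2 : (Finset.univ.filter (fun j : Fin n => μ j < μ ⟨1, hi1⟩)).card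
        = Multiset.countP (fun x : ℝ => x < μ ⟨1, hi1⟩) (Multiset.map μ Finset.univ.val) := by
      rw [Multiset.countP_map]
      rfl
    have hle1 : (Finset.univ.filter (fun j : Fin n => μ j < μ ⟨1, hi1⟩)).card ≤ 1 := by
      have hsub2 : Finset.univ.filter (fun j : Fin n => μ j < μ ⟨1, hi1⟩)
          ⊆ {(⟨0, by omega⟩ : Fin n)} := by
        intro j hj
        rw [Finset.mem_filter] at hj
        rw [Finset.mem_singleton]
        by_contra hj0
        have hjv : j.val ≠ 0 := fun hzz => hj0 (Fin.ext hzz)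
        have hle : (⟨1, hi1⟩ : Fin n) ≤ j := Fin.mk_le_mk.mpr (by omega)
        exact absurd (hμmono hle) (not_le.mpr hj.2)
      exact le_trans (Finset.card_le_card hsub2) (by simp)
    rw [e1, hms, ← e2] at h2le
    omega
  -- the conjugated transition matrix
  set M : Matrix V V ℝ := (1 : Matrix V V ℝ) - (1 - α) • wLap w with hM
  set ν : V → ℝ := fun i => 1 - (1 - α) * ev i with hν
  have hMspec : M = U * diagonal ν * Uᵀ := by
    rw [hM, hspec]
    rw [show (1 : Matrix V V ℝ) = U * (1 : Matrix V V ℝ) * Uᵀ by rw [Matrix.mul_one, hU1]]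
    rw [show (1 - α) • (U * diagonal ev * Uᵀ) = U * ((1 - α) • diagonal ev) * Uᵀ from by
      rw [Matrix.mul_smul, Matrix.smul_mul]]
    rw [← Matrix.sub_mul, ← Matrix.mul_sub]
    congr 2
    ext i j
    by_cases hij : i = j
    · subst hij
      simp [Matrix.sub_apply, Matrix.smul_apply, Matrix.one_apply_eq, Matrix.diagonal_apply_eq,
        smul_eq_mul, hν]
    · simp [Matrix.sub_apply, Matrix.smul_apply, Matrix.one_apply_ne hij,
        Matrix.diagonal_apply_ne _ hij]
  have hMk : ∀ m : ℕ, M ^ m = U * diagonal (fun i => ν i ^ m) * Uᵀ := by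
    intro m
    induction m with
    | zero =>
      rw [pow_zero]
      rw [show diagonal (fun i => ν i ^ 0) = (1 : Matrix V V ℝ) from by simp]
      rw [Matrix.mul_one, hU1]
    | succ m ih =>
      rw [pow_succ, ih, hMspec]
      simp only [← Matrix.mul_assoc]
      rw [Matrix.mul_assoc (U * diagonal fun i => ν i ^ m) Uᵀ U, hU2, Matrix.mul_one,
        Matrix.mul_assoc U (diagonal fun i => ν i ^ m) (diagonal ν),
        Matrix.diagonal_mul_diagonal]
      rw [show (fun i => ν i ^ m * ν i) = fun i => ν i ^ (m + 1) from
        funext fun i => (pow_succ _ _).symm]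
  -- intertwining of the transition matrix and M
  have hSM : invSqrtT w * M = wTrans w α * invSqrtT w := by
    ext i j
    rw [invSqrtT, Matrix.diagonal_mul, Matrix.mul_diagonal]
    rw [hM, Matrix.sub_apply, Matrix.smul_apply, aux_wLap_apply, smul_eq_mul]
    rw [wTrans, Matrix.add_apply, Matrix.smul_apply, Matrix.smul_apply, Matrix.diagonal_mul,
      Matrix.of_apply, smul_eq_mul, smul_eq_mul]
    have hinv : (Real.sqrt (wdeg w i))⁻¹ * (Real.sqrt (wdeg w i))⁻¹ = (wdeg w i)⁻¹ := by
      rw [← mul_inv, Real.mul_self_sqrt (le_of_lt (hdegpos i))]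
    rw [← hinv]
    by_cases hij : i = j
    · subst hij; ring
    · rw [Matrix.one_apply_ne hij]; ring
  have hSMk : ∀ m : ℕ, (wTrans w α) ^ m * invSqrtT w = invSqrtT w * M ^ m := by
    intro m
    induction m with
    | zero => rw [pow_zero, pow_zero, Matrix.one_mul, Matrix.mul_one]
    | succ m ih =>
      rw [pow_succ, Matrix.mul_assoc, ← hSM, ← Matrix.mul_assoc, ih, Matrix.mul_assoc, ← pow_succ]
  -- stationarity of π
  have hπsum : ∑ u, π u = 1 := by
    rw [Finset.sum_congr rfl fun u _ => hπ u, ← Finset.sum_div,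
      show (∑ u, wdeg w u) = wvol w Finset.univ from rfl]
    exact div_self (ne_of_gt hvol)
  have hπP : π ᵥ* wTrans w α = π := by
    funext v
    rw [show (π ᵥ* wTrans w α) v = ∑ u, π u * wTrans w α u v from rfl]
    have e : ∀ u, π u * wTrans w α u v
        = α * (π u * (1 : Matrix V V ℝ) u v) + (1 - α) * ((wvol w Finset.univ)⁻¹ * w u v) := by
      intro u
      have hPuv : wTrans w α u v
          = α * (1 : Matrix V V ℝ) u v + (1 - α) * ((wdeg w u)⁻¹ * w u v) := by
        rw [wTrans, Matrix.add_apply, Matrix.smul_apply, Matrix.smul_apply, Matrix.diagonal_mul,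
          Matrix.of_apply, smul_eq_mul, smul_eq_mul]
      have hπd : π u * (wdeg w u)⁻¹ = (wvol w Finset.univ)⁻¹ := by
        rw [hπ u]
        field_simp
        exact div_self (ne_of_gt (hdegpos u))
      calc π u * wTrans w α u v
          = α * (π u * (1 : Matrix V V ℝ) u v) + (1 - α) * ((π u * (wdeg w u)⁻¹) * w u v) := by
            rw [hPuv]; ring
        _ = α * (π u * (1 : Matrix V V ℝ) u v) + (1 - α) * ((wvol w Finset.univ)⁻¹ * w u v) := by
            rw [hπd]
    rw [Finset.sum_congr rfl fun u _ => e u, Finset.sum_add_distrib, ← Finset.mul_sum,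
      ← Finset.mul_sum]
    have s1 : ∑ u, π u * (1 : Matrix V V ℝ) u v = π v := by
      simp [Matrix.one_apply]
    have s2 : ∑ u, (wvol w Finset.univ)⁻¹ * w u v = (wvol w Finset.univ)⁻¹ * wdeg w v := by
      rw [← Finset.mul_sum, Finset.sum_congr rfl fun u _ => hsymm u v,
        show (∑ u, w v u) = wdeg w v from rfl]
    rw [s1, s2, hπ v]
    field_simp
    ring
  have hπPk : ∀ m : ℕ, π ᵥ* (wTrans w α) ^ m = π := by
    intro m
    induction m with
    | zero => rw [pow_zero, Matrix.vecMul_one]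
    | succ m ih => rw [pow_succ, ← Matrix.vecMul_vecMul, ih, hπP]
  -- the evolved discrepancy vector
  set g : V → ℝ := (f₀ - π) ᵥ* invSqrtT w with hg
  set q : V → ℝ := g ᵥ* U with hq
  have hfk : (f k - π) ᵥ* invSqrtT w = (fun i => q i * ν i ^ k) ᵥ* Uᵀ := by
    rw [hf k, show f₀ ᵥ* wTrans w α ^ k - π = (f₀ - π) ᵥ* wTrans w α ^ k from by
      rw [Matrix.sub_vecMul, hπPk k]]
    rw [Matrix.vecMul_vecMul, hSMk k, ← Matrix.vecMul_vecMul, ← hg, hMk k,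
      ← Matrix.vecMul_vecMul, ← Matrix.vecMul_vecMul, ← hq]
    have hd : q ᵥ* diagonal (fun i => ν i ^ k) = fun i => q i * ν i ^ k := by
      funext i
      rw [Matrix.vecMul_diagonal]
    rw [hd]
  -- orthogonality to the top eigenvector
  set φ : V → ℝ := fun u => Real.sqrt (wdeg w u) with hφ
  have hgφ : g ⬝ᵥ φ = 0 := by
    have e : g ⬝ᵥ φ = ∑ u, (f₀ u - π u) := by
      rw [hg]
      unfold dotProduct
      refine Finset.sum_congr rfl fun u _ => ?_
      rw [invSqrtT, Matrix.vecMul_diagonal, hφ]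
      have hu : (Real.sqrt (wdeg w u))⁻¹ * Real.sqrt (wdeg w u) = 1 :=
        inv_mul_cancel₀ (ne_of_gt (hs u))
      rw [mul_assoc, hu, mul_one]
      rfl
    rw [e, Finset.sum_sub_distrib, hf₀sum, hπsum, sub_self]
  set c : V → ℝ := Uᵀ *ᵥ φ with hc
  have hφc : U *ᵥ c = φ := by
    rw [hc, Matrix.mulVec_mulVec, hU1, Matrix.one_mulVec]
  have hDc : ∀ j, ev j * c j = 0 := by
    have h1 : wLap w *ᵥ φ = 0 := aux_wLap_mulVec_sqrt w hdegpos
    rw [hspec] at h1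
    have h2 : (U * diagonal ev) *ᵥ c = 0 := by
      rw [hc, Matrix.mulVec_mulVec]
      exact h1
    have h3 : diagonal ev *ᵥ c = 0 := by
      have h4 := congrArg (fun z => Uᵀ *ᵥ z) h2
      simp only [Matrix.mulVec_mulVec, Matrix.mulVec_zero] at h4
      rw [← Matrix.mul_assoc, hU2, Matrix.one_mul] at h4
      exact h4
    intro j
    have h5 := congrFun h3 j
    rwa [Matrix.mulVec_diagonal] at h5
  have hcne : c ≠ 0 := by
    intro h0
    have hφ0 : φ = 0 := by rw [← hφc, h0, Matrix.mulVec_zero]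
    have := congrFun hφ0 (Classical.arbitrary V)
    exact absurd this (ne_of_gt (hs _))
  have hqc : ∑ j, q j * c j = 0 := by
    have e : g ⬝ᵥ (U *ᵥ c) = (g ᵥ* U) ⬝ᵥ c := Matrix.dotProduct_mulVec g U c
    rw [hφc, hgφ] at e
    rw [hq]
    exact e.symm
  -- the coordinatewise bound
  have hkey : ∀ i : V, (q i * ν i ^ k) ^ 2 ≤ (Λ ^ k) ^ 2 * q i ^ 2 := by
    intro i
    by_cases hcase : μ ⟨1, hi1⟩ ≤ ev i
    · have hl1 : 1 - (1 - α) * μ ⟨n - 1, hiN⟩ ≤ ν i := by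
        have := mul_le_mul_of_nonneg_left (hub i) (by linarith : (0:ℝ) ≤ 1 - α)
        simp only [hν]
        linarith
      have hl2 : ν i ≤ 1 - (1 - α) * μ ⟨1, hi1⟩ := by
        have := mul_le_mul_of_nonneg_left hcase (by linarith : (0:ℝ) ≤ 1 - α)
        simp only [hν]
        linarith
      have habs : |ν i| ≤ Λ := by
        rw [hΛdef, max_comm]
        exact abs_le_max_abs_abs hl1 hl2
      have h2 : ν i ^ 2 ≤ Λ ^ 2 := by
        rw [← sq_abs (ν i), ← sq_abs Λ]
        exact pow_le_pow_left₀ (abs_nonneg _) (le_trans habs (le_abs_self Λ)) 2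
      calc (q i * ν i ^ k) ^ 2 = (ν i ^ 2) ^ k * q i ^ 2 := by
            rw [mul_pow, pow_right_comm, mul_comm]
        _ ≤ (Λ ^ 2) ^ k * q i ^ 2 :=
            mul_le_mul_of_nonneg_right (pow_le_pow_left₀ (sq_nonneg _) h2 k) (sq_nonneg _)
        _ = (Λ ^ k) ^ 2 * q i ^ 2 := by rw [pow_right_comm]
    · push_neg at hcase
      have hothers : ∀ j : V, j ≠ i → c j = 0 := by
        intro j hj
        have hevj : ¬ ev j < μ ⟨1, hi1⟩ := fun hlt => hj (hcount j i hlt hcase)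
        push_neg at hevj
        have hpos : 0 < ev j := lt_of_le_of_lt (hev0 i) (lt_of_lt_of_le hcase hevj)
        rcases mul_eq_zero.mp (hDc j) with h' | h'
        · exact absurd h' (ne_of_gt hpos)
        · exact h'
      have hqi : q i = 0 := by
        have hsum : ∑ j, q j * c j = q i * c i :=
          Finset.sum_eq_single i (fun j _ hj => by rw [hothers j hj, mul_zero]) (by simp)
        have hci : c i ≠ 0 := by
          intro h0
          apply hcne
          funext j
          by_cases hji : j = i
          · rw [hji]; exact h0
          · exact hothers j hji
        have hzero : q i * c i = 0 := by rw [← hsum, hqc]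
        rcases mul_eq_zero.mp hzero with h' | h'
        · exact h'
        · exact absurd h' hci
      rw [hqi]
      simp
  -- conclusion
  have hUUT : Uᵀ * Uᵀᵀ = 1 := by rw [Matrix.transpose_transpose, hU2]
  have e1 : ∑ y : V, ((fun i => q i * ν i ^ k) ᵥ* Uᵀ) y ^ 2 = ∑ i, (q i * ν i ^ k) ^ 2 :=
    aux_sumsq_vecMul Uᵀ hUUT _
  have e2 : ∑ y : V, q y ^ 2 = ∑ y, g y ^ 2 := by
    rw [hq]
    exact aux_sumsq_vecMul U hU1 g
  rw [hfk]
  show euclNorm ((fun i => q i * ν i ^ k) ᵥ* Uᵀ) ≤ Λ ^ k * euclNorm g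
  rw [euclNorm, euclNorm]
  calc Real.sqrt (∑ y, ((fun i => q i * ν i ^ k) ᵥ* Uᵀ) y ^ 2)
      = Real.sqrt (∑ i, (q i * ν i ^ k) ^ 2) := by rw [e1]
    _ ≤ Real.sqrt ((Λ ^ k) ^ 2 * ∑ i, g i ^ 2) := by
        apply Real.sqrt_le_sqrt
        rw [← e2, Finset.mul_sum]
        exact Finset.sum_le_sum fun i _ => hkey i
    _ = Λ ^ k * Real.sqrt (∑ i, g i ^ 2) := by
        rw [Real.sqrt_mul (sq_nonneg _), Real.sqrt_sq (pow_nonneg hΛ0 k)]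

end
end

section
/- Let D be a Eulerian directed graph on n vertices with all degrees positive and let 0 < α < 1. Let π be the row vector with π(u) = d_u/vol(D), let f_0 be any vertex probability distribution on V (a row vector with nonnegative entries summing to 1), and let f_k = f_0 P_α^k for k ≥ 0. Then ‖(f_k − π) T^{-1/2}‖ ≤ σ_α^k · ‖(f_0 − π) T^{-1/2}‖. -/
open Matrix Polynomial

noncomputable section

/-- The (out-)degree of a vertex in a directed graph with adjacency matrix `A`. -/
def ddeg {V : Type*} [Fintype V] (A : Matrix V V ℝ) (x : V) : ℝ := ∑ y, A x y

/-- The diagonal matrix `T^{-1/2}` of a directed graph. -/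
def dInvSqrtT {V : Type*} [Fintype V] [DecidableEq V] (A : Matrix V V ℝ) : Matrix V V ℝ :=
  Matrix.diagonal fun x => (Real.sqrt (ddeg A x))⁻¹

/-- The non-symmetric Laplacian `vecL = I - T^{-1/2} A T^{-1/2}` of a directed graph. -/
def dvecL {V : Type*} [Fintype V] [DecidableEq V] (A : Matrix V V ℝ) : Matrix V V ℝ :=
  1 - dInvSqrtT A * A * dInvSqrtT A

/-- The Laplacian `(vecL + vecLᵀ)/2` of a directed graph. -/
def dLap {V : Type*} [Fintype V] [DecidableEq V] (A : Matrix V V ℝ) : Matrix V V ℝ :=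
  (1 / 2 : ℝ) • (dvecL A + (dvecL A)ᵀ)

/-- The matrix `L_α = I - (1-α) vecL = T^{1/2} P_α T^{-1/2}`. -/
def dLalpha {V : Type*} [Fintype V] [DecidableEq V] (A : Matrix V V ℝ) (α : ℝ) :
    Matrix V V ℝ :=
  1 - (1 - α) • dvecL A

/-- The transition matrix `P_α = α I + (1-α) T⁻¹ A` of the α-lazy random walk. -/
def dTrans {V : Type*} [Fintype V] [DecidableEq V] (A : Matrix V V ℝ) (α : ℝ) :
    Matrix V V ℝ :=
  α • (1 : Matrix V V ℝ) + (1 - α) • ((Matrix.diagonal fun x => (ddeg A x)⁻¹) * A)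

/-- The volume of a set of vertices of a directed graph. -/
def dvol {V : Type*} [Fintype V] (A : Matrix V V ℝ) (X : Finset V) : ℝ :=
  ∑ x ∈ X, ddeg A x

/-- The unit vector `φ₀` with `φ₀(x) = √(d_x)/√(vol D)`. -/
def dphi {V : Type*} [Fintype V] (A : Matrix V V ℝ) : V → ℝ :=
  fun x => Real.sqrt (ddeg A x) / Real.sqrt (dvol A Finset.univ)

/-- The set of values `‖L_α f‖ / ‖f‖` over nonzero vectors `f` orthogonal to `φ₀ᵀ`;
its greatest element is the second largest singular value `σ_α` of `L_α`. -/
def sigmaSet {V : Type*} [Fintype V] [DecidableEq V] (A : Matrix V V ℝ) (α : ℝ) : Set ℝ :=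
  {r | ∃ f : V → ℝ, f ≠ 0 ∧ (∑ x, f x * dphi A x) = 0 ∧
    r = euclNorm (dLalpha A α *ᵥ f) / euclNorm f}

section Aux
variable {V : Type*} [Fintype V] [DecidableEq V]

lemma euclNorm_nonneg {m : Type*} [Fintype m] (g : m → ℝ) : 0 ≤ euclNorm g :=
  Real.sqrt_nonneg _

lemma euclNorm_pos {m : Type*} [Fintype m] {g : m → ℝ} (hg : g ≠ 0) : 0 < euclNorm g := by
  apply Real.sqrt_pos.2
  obtain ⟨x, hx⟩ := Function.ne_iff.1 hg
  exact Finset.sum_pos' (fun i _ => sq_nonneg _)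
    ⟨x, Finset.mem_univ x, sq_pos_of_ne_zero hx⟩

/-- Cauchy-Schwarz -/
lemma dot_le_norm_mul_norm {m : Type*} [Fintype m] (g h : m → ℝ) :
    g ⬝ᵥ h ≤ euclNorm g * euclNorm h := by
  calc g ⬝ᵥ h ≤ |∑ x, g x * h x| := le_abs_self _
    _ = Real.sqrt ((∑ x, g x * h x) ^ 2) := (Real.sqrt_sq_eq_abs _).symm
    _ ≤ Real.sqrt ((∑ x, g x ^ 2) * ∑ x, h x ^ 2) :=
        Real.sqrt_le_sqrt (Finset.sum_mul_sq_le_sq_mul_sq _ _ _)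
    _ = euclNorm g * euclNorm h := Real.sqrt_mul (by positivity) _

lemma vecMul_smul_mat {V : Type*} [Fintype V] (v : V → ℝ) (c : ℝ) (M : Matrix V V ℝ) :
    v ᵥ* (c • M) = c • (v ᵥ* M) := by
  funext y
  simp only [Matrix.vecMul, dotProduct, Matrix.smul_apply, smul_eq_mul,
    Pi.smul_apply, Finset.mul_sum]
  exact Finset.sum_congr rfl fun x _ => by ring

lemma dLalpha_eq (A : Matrix V V ℝ) (α : ℝ) :
    dLalpha A α = α • (1 : Matrix V V ℝ) + (1 - α) • (dInvSqrtT A * A * dInvSqrtT A) := by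
  unfold dLalpha dvecL
  rw [smul_sub, sub_sub_eq_add_sub, sub_smul, one_smul]
  module

lemma sq_sqrtInv {d : ℝ} (hd : 0 < d) :
    (Real.sqrt d)⁻¹ * (Real.sqrt d)⁻¹ = d⁻¹ := by
  rw [← mul_inv, Real.mul_self_sqrt hd.le]

lemma trans_mul_S (A : Matrix V V ℝ) (hdegpos : ∀ x, 0 < ddeg A x) (α : ℝ) :
    dTrans A α * dInvSqrtT A = dInvSqrtT A * dLalpha A α := by
  have hSS : dInvSqrtT A * dInvSqrtT A = Matrix.diagonal fun x => (ddeg A x)⁻¹ := by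
    unfold dInvSqrtT
    rw [Matrix.diagonal_mul_diagonal]
    have : (fun x => (Real.sqrt (ddeg A x))⁻¹ * (Real.sqrt (ddeg A x))⁻¹)
        = fun x => (ddeg A x)⁻¹ := funext fun x => sq_sqrtInv (hdegpos x)
    rw [this]
  rw [dLalpha_eq, dTrans, Matrix.add_mul, Matrix.mul_add, Matrix.smul_mul,
    Matrix.smul_mul, Matrix.mul_smul, Matrix.mul_smul, Matrix.one_mul, Matrix.mul_one,
    ← hSS]
  ring_nf
  rw [Matrix.mul_assoc, Matrix.mul_assoc, Matrix.mul_assoc]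

/-- `φ₀` is a right eigenvector of `L_α` with eigenvalue 1. -/
lemma Lalpha_mulVec_phi (A : Matrix V V ℝ) (hdegpos : ∀ x, 0 < ddeg A x) (α : ℝ) :
    dLalpha A α *ᵥ dphi A = dphi A := by
  rw [dLalpha_eq, add_mulVec, smul_mulVec, smul_mulVec, one_mulVec]
  have h1 : dInvSqrtT A *ᵥ dphi A = fun _ => (Real.sqrt (dvol A Finset.univ))⁻¹ := by
    funext x
    rw [dInvSqrtT, mulVec_diagonal, dphi]
    rw [div_eq_mul_inv, ← mul_assoc,
      inv_mul_cancel₀ (Real.sqrt_pos.2 (hdegpos x)).ne', one_mul]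
  have h2 : (dInvSqrtT A * A * dInvSqrtT A) *ᵥ dphi A = dphi A := by
    rw [Matrix.mul_assoc, ← mulVec_mulVec, ← mulVec_mulVec, h1]
    funext x
    rw [dInvSqrtT, mulVec_diagonal, mulVec]
    have : (A x ⬝ᵥ fun _ => (Real.sqrt (dvol A Finset.univ))⁻¹)
        = ddeg A x * (Real.sqrt (dvol A Finset.univ))⁻¹ := by
      simp [dotProduct, ddeg, Finset.sum_mul]
    rw [this, dphi, ← mul_assoc]
    have hx := hdegpos x
    rw [show (Real.sqrt (ddeg A x))⁻¹ * ddeg A x = Real.sqrt (ddeg A x) by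
      rw [← Real.mul_self_sqrt hx.le]; field_simp; rw [Real.sqrt_sq (Real.sqrt_nonneg _)]]
    rw [div_eq_mul_inv]
  rw [h2]
  funext x
  simp only [Pi.add_apply, Pi.smul_apply, smul_eq_mul]
  ring

/-- orthogonality to `φ₀` is preserved by right multiplication by `L_α`. -/
lemma orth_preserved (A : Matrix V V ℝ) (hdegpos : ∀ x, 0 < ddeg A x) (α : ℝ)
    (h : V → ℝ) (horth : ∑ x, h x * dphi A x = 0) :
    ∑ x, (h ᵥ* dLalpha A α) x * dphi A x = 0 := by
  have : (h ᵥ* dLalpha A α) ⬝ᵥ dphi A = h ⬝ᵥ dphi A := by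
    rw [← dotProduct_mulVec, Lalpha_mulVec_phi A hdegpos]
  simpa [dotProduct, horth] using this

lemma step_bound (A : Matrix V V ℝ) (hdegpos : ∀ x, 0 < ddeg A x) (α : ℝ)
    (σα : ℝ) (hσα : IsGreatest (sigmaSet A α) σα)
    (h : V → ℝ) (horth : ∑ x, h x * dphi A x = 0) :
    euclNorm (h ᵥ* dLalpha A α) ≤ σα * euclNorm h := by
  have hσ0 : 0 ≤ σα := by
    obtain ⟨g, -, -, hr⟩ := hσα.1
    rw [hr]
    exact div_nonneg (euclNorm_nonneg _) (euclNorm_nonneg _)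
  set g := h ᵥ* dLalpha A α with hg
  by_cases hg0 : g = 0
  · rw [hg0]
    have : euclNorm (0 : V → ℝ) = 0 := by simp [euclNorm]
    rw [this]
    exact mul_nonneg hσ0 (euclNorm_nonneg h)
  · have horthg : ∑ x, g x * dphi A x = 0 := orth_preserved A hdegpos α h horth
    have hmem : euclNorm (dLalpha A α *ᵥ g) / euclNorm g ∈ sigmaSet A α :=
      ⟨g, hg0, horthg, rfl⟩
    have hLg : euclNorm (dLalpha A α *ᵥ g) ≤ σα * euclNorm g := by
      have := hσα.2 hmem
      rwa [div_le_iff₀ (euclNorm_pos hg0)] at this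
    have key : euclNorm g * euclNorm g ≤ (σα * euclNorm h) * euclNorm g := by
      have h1 : euclNorm g * euclNorm g = g ⬝ᵥ g := by
        rw [euclNorm, Real.mul_self_sqrt (by positivity : (0:ℝ) ≤ ∑ x, g x ^ 2)]
        simp [dotProduct, sq]
      have h2 : g ⬝ᵥ g = h ⬝ᵥ (dLalpha A α *ᵥ g) := by
        rw [dotProduct_mulVec, ← hg]
      have h3 : h ⬝ᵥ (dLalpha A α *ᵥ g) ≤ euclNorm h * euclNorm (dLalpha A α *ᵥ g) :=
        dot_le_norm_mul_norm _ _
      have h4 : euclNorm h * euclNorm (dLalpha A α *ᵥ g)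
          ≤ euclNorm h * (σα * euclNorm g) :=
        mul_le_mul_of_nonneg_left hLg (euclNorm_nonneg h)
      nlinarith [h1, h2, h3, h4]
    exact le_of_mul_le_mul_right (by linarith [key]) (euclNorm_pos hg0)
end Aux

/-- mixing of the α-lazy random walk on a Eulerian directed graph. -/
theorem stmt_7 {V : Type*} [Fintype V] [DecidableEq V]
    (A : Matrix V V ℝ)
    (h01 : ∀ x y, A x y = 0 ∨ A x y = 1)
    (hEuler : ∀ x, (∑ y, A x y) = ∑ y, A y x)
    (hdegpos : ∀ x, 0 < ddeg A x)
    (α : ℝ) (hα0 : 0 < α) (hα1 : α < 1)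
    (σα : ℝ) (hσα : IsGreatest (sigmaSet A α) σα)
    (π f₀ : V → ℝ)
    (hπ : ∀ u, π u = ddeg A u / dvol A Finset.univ)
    (hf₀nonneg : ∀ v, 0 ≤ f₀ v) (hf₀sum : ∑ v, f₀ v = 1)
    (f : ℕ → V → ℝ) (hf : ∀ k, f k = f₀ ᵥ* (dTrans A α) ^ k)
    (k : ℕ) :
    euclNorm ((f k - π) ᵥ* dInvSqrtT A) ≤ σα ^ k * euclNorm ((f₀ - π) ᵥ* dInvSqrtT A) := by
  have hneV : Nonempty V := by
    by_contra hc
    rw [not_nonempty_iff] at hc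
    rw [Finset.univ_eq_empty, Finset.sum_empty] at hf₀sum
    exact zero_ne_one hf₀sum
  have hvol : 0 < dvol A Finset.univ :=
    Finset.sum_pos (fun x _ => hdegpos x) Finset.univ_nonempty
  -- stationarity of π
  have hstat : π ᵥ* dTrans A α = π := by
    funext y
    have hA : ((fun _ => (dvol A Finset.univ)⁻¹) ᵥ* A) y
        = (dvol A Finset.univ)⁻¹ * ddeg A y := by
      simp only [Matrix.vecMul, dotProduct]
      rw [← Finset.mul_sum]
      congr 1
      rw [ddeg]
      exact (hEuler y).symm
    have hD : π ᵥ* (Matrix.diagonal fun x => (ddeg A x)⁻¹)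
        = fun _ => (dvol A Finset.univ)⁻¹ := by
      funext x
      rw [vecMul_diagonal, hπ x, div_eq_mul_inv, mul_right_comm,
        mul_inv_cancel₀ (hdegpos x).ne', one_mul]
    rw [dTrans, vecMul_add, vecMul_smul_mat, vecMul_smul_mat, vecMul_one,
      ← vecMul_vecMul, hD]
    simp only [Pi.add_apply, Pi.smul_apply, smul_eq_mul, hA, hπ y]
    field_simp <;> ring
  set S := dInvSqrtT A with hS
  set hvec : ℕ → V → ℝ := fun k => (f k - π) ᵥ* S with hhvec
  have hf0 : f 0 = f₀ := by rw [hf 0, pow_zero, vecMul_one]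
  have hrec : ∀ n, hvec (n + 1) = hvec n ᵥ* dLalpha A α := by
    intro n
    have hstep : f (n + 1) = f n ᵥ* dTrans A α := by
      rw [hf (n + 1), hf n, pow_succ, ← vecMul_vecMul]
    simp only [hhvec]
    rw [hstep, ← hstat, ← sub_vecMul, vecMul_vecMul, hS, trans_mul_S A hdegpos α,
      ← vecMul_vecMul]
    rw [hstat]
  have hbase : ∑ x, hvec 0 x * dphi A x = 0 := by
    have hterm : ∀ x, hvec 0 x * dphi A x
        = (f₀ x - π x) * (Real.sqrt (dvol A Finset.univ))⁻¹ := by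
      intro x
      simp only [hhvec, hS, dInvSqrtT]
      rw [vecMul_diagonal, dphi, hf0, div_eq_mul_inv]
      have hd : Real.sqrt (ddeg A x) ≠ 0 := (Real.sqrt_pos.2 (hdegpos x)).ne'
      simp only [Pi.sub_apply]
      field_simp <;> ring
    rw [Finset.sum_congr rfl fun x _ => hterm x, ← Finset.sum_mul]
    have hsum : ∑ x, (f₀ x - π x) = 0 := by
      rw [Finset.sum_sub_distrib, hf₀sum]
      have : ∑ x, π x = 1 := by
        simp_rw [hπ]
        rw [← Finset.sum_div]
        exact div_self hvol.ne'
      rw [this, sub_self]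
    rw [hsum, zero_mul]
  have hσ0 : 0 ≤ σα := by
    obtain ⟨g, -, -, hr⟩ := hσα.1
    rw [hr]
    exact div_nonneg (euclNorm_nonneg _) (euclNorm_nonneg _)
  have main : ∀ n, (∑ x, hvec n x * dphi A x = 0) ∧
      euclNorm (hvec n) ≤ σα ^ n * euclNorm (hvec 0) := by
    intro n
    induction n with
    | zero => exact ⟨hbase, by simp⟩
    | succ n ih =>
      refine ⟨?_, ?_⟩
      · rw [hrec n]
        exact orth_preserved A hdegpos α _ ih.1
      · rw [hrec n]
        calc euclNorm (hvec n ᵥ* dLalpha A α) ≤ σα * euclNorm (hvec n) :=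
              step_bound A hdegpos α σα hσα _ ih.1
          _ ≤ σα * (σα ^ n * euclNorm (hvec 0)) :=
              mul_le_mul_of_nonneg_left ih.2 hσ0
          _ = σα ^ (n + 1) * euclNorm (hvec 0) := by ring
  have hfinal := (main k).2
  simp only [hhvec, hf0] at hfinal
  exact hfinal
end
end
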